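/- For all complex numbers x, y with x ≠ 0, y ≠ 0 and x + y ≠ 0, one has R̃₁₂(x+y) R̃₁₃(x) R₂₃(y) = R₂₃(y) R̃₁₃(x) R̃₁₂(x+y) as operators on (ℂⁿ)^{⊗3}. -/

import Mathlib

noncomputable section
open scoped Kronecker
open Matrix

/-- Square matrices acting on the tensor power `(ℂⁿ)^{⊗ι}`, modelled on the
function basis `ι → Fin n`. -/
abbrev TMat (ι : Type) (n : ℕ) := Matrix (ι → Fin n) (ι → Fin n) ℂ

/-- The matrix units `E_{ij}` of `End(ℂⁿ)`. -/
def matE (n : ℕ) (i j : Fin n) : Matrix (Fin n) (Fin n) ℂ := Matrix.single i j 1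

/-- The flip `P = Σ E_{ij} ⊗ E_{ji}` on `ℂⁿ ⊗ ℂⁿ`. -/
def flipP (n : ℕ) : Matrix (Fin n × Fin n) (Fin n × Fin n) ℂ :=
  ∑ i : Fin n, ∑ j : Fin n, matE n i j ⊗ₖ matE n j i

/-- `P̄ = Σ E_{ij} ⊗ E_{ij}` on `ℂⁿ ⊗ ℂⁿ`. -/
def PbarM (n : ℕ) : Matrix (Fin n × Fin n) (Fin n × Fin n) ℂ :=
  ∑ i : Fin n, ∑ j : Fin n, matE n i j ⊗ₖ matE n i j

/-- The conjugate `X̃ = G⁻¹ Xᵀ G` of `X` relative to the bilinear form with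
Gram matrix `G`, i.e. `⟨X u, v⟩ = ⟨u, X̃ v⟩` where `⟨u, v⟩ = uᵀ G v`. -/
def conjF {n : ℕ} (G X : Matrix (Fin n) (Fin n) ℂ) : Matrix (Fin n) (Fin n) ℂ :=
  G⁻¹ * Xᵀ * G

/-- `P̃ = Σ Ẽ_{ij} ⊗ E_{ji}`. -/
def PtilM (n : ℕ) (G : Matrix (Fin n) (Fin n) ℂ) : Matrix (Fin n × Fin n) (Fin n × Fin n) ℂ :=
  ∑ i : Fin n, ∑ j : Fin n, conjF G (matE n i j) ⊗ₖ matE n j i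

/-- `P̂ = Σ Ẽ_{ij} ⊗ E_{ij}`. -/
def PhatM (n : ℕ) (G : Matrix (Fin n) (Fin n) ℂ) : Matrix (Fin n × Fin n) (Fin n × Fin n) ℂ :=
  ∑ i : Fin n, ∑ j : Fin n, conjF G (matE n i j) ⊗ₖ matE n i j

/-- The Yang R-matrix `R(x) = 1 − P x⁻¹`. -/
def Rm (n : ℕ) (x : ℂ) : Matrix (Fin n × Fin n) (Fin n × Fin n) ℂ := 1 - x⁻¹ • flipP n

/-- `R̄(x) = 1 − P̄ x⁻¹`. -/
def RbarM (n : ℕ) (x : ℂ) : Matrix (Fin n × Fin n) (Fin n × Fin n) ℂ := 1 - x⁻¹ • PbarM n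

/-- `R̃(x) = 1 − P̃ x⁻¹`. -/
def RtilM (n : ℕ) (G : Matrix (Fin n) (Fin n) ℂ) (x : ℂ) :
    Matrix (Fin n × Fin n) (Fin n × Fin n) ℂ := 1 - x⁻¹ • PtilM n G

/-- `R̂(x) = 1 − P̂ x⁻¹`. -/
def RhatM (n : ℕ) (G : Matrix (Fin n) (Fin n) ℂ) (x : ℂ) :
    Matrix (Fin n × Fin n) (Fin n × Fin n) ℂ := 1 - x⁻¹ • PhatM n G

/-- `Z_{ij}` : the operator on a tensor power of `ℂⁿ` acting as the two-factor
operator `Z` in the `i`-th and `j`-th tensor factors and as the identity elsewhere. -/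
def lift2 {n : ℕ} {ι : Type} [Fintype ι] [DecidableEq ι] (i j : ι)
    (Z : Matrix (Fin n × Fin n) (Fin n × Fin n) ℂ) : TMat ι n :=
  fun f g => Z (f i, f j) (g i, g j) *
    ∏ p : ι, if p = i ∨ p = j then 1 else (if f p = g p then 1 else 0)

-- entry of PtilM
lemma PtilM_apply {n : ℕ} (G : Matrix (Fin n) (Fin n) ℂ) (a b c d : Fin n) :
    PtilM n G (a, b) (c, d) = G⁻¹ a b * G d c := by
  simp [PtilM, conjF, matE, Matrix.mul_apply, Matrix.kroneckerMap_apply,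
    Matrix.single, Matrix.sum_apply, Finset.mul_sum, Finset.sum_mul]
  simp [ite_and, Finset.sum_ite_eq, Finset.sum_ite_eq']

lemma flipP_apply {n : ℕ} (a b c d : Fin n) :
    flipP n (a, b) (c, d) = if a = d ∧ b = c then 1 else 0 := by
  simp [flipP, matE, Matrix.kroneckerMap_apply, Matrix.single,
    Matrix.sum_apply]
  simp [ite_and, Finset.sum_ite_eq, Finset.sum_ite_eq']
  by_cases h : a = d <;> simp [h, eq_comm]

lemma lift2_01_apply {n : ℕ} (Z : Matrix (Fin n × Fin n) (Fin n × Fin n) ℂ) (f g : Fin 3 → Fin n) :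
    lift2 (0 : Fin 3) 1 Z f g = Z (f 0, f 1) (g 0, g 1) * (if f 2 = g 2 then 1 else 0) := by
  simp [lift2, Fin.prod_univ_three]

lemma lift2_02_apply {n : ℕ} (Z : Matrix (Fin n × Fin n) (Fin n × Fin n) ℂ) (f g : Fin 3 → Fin n) :
    lift2 (0 : Fin 3) 2 Z f g = Z (f 0, f 2) (g 0, g 2) * (if f 1 = g 1 then 1 else 0) := by
  simp [lift2, Fin.prod_univ_three]

lemma lift2_12_apply {n : ℕ} (Z : Matrix (Fin n × Fin n) (Fin n × Fin n) ℂ) (f g : Fin 3 → Fin n) :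
    lift2 (1 : Fin 3) 2 Z f g = Z (f 1, f 2) (g 1, g 2) * (if f 0 = g 0 then 1 else 0) := by
  simp [lift2, Fin.prod_univ_three]

def eq3 {n : ℕ} : (Fin n × Fin n × Fin n) ≃ (Fin 3 → Fin n) where
  toFun x := ![x.1, x.2.1, x.2.2]
  invFun h := (h 0, h 1, h 2)
  left_inv x := rfl
  right_inv h := by funext p; fin_cases p <;> rfl

lemma sum_fn3 {n : ℕ} (T : (Fin 3 → Fin n) → ℂ) :
    ∑ h : Fin 3 → Fin n, T h = ∑ a : Fin n, ∑ b : Fin n, ∑ c : Fin n, T ![a, b, c] := by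
  rw [← Equiv.sum_comp (eq3 (n := n)) T]
  rw [Fintype.sum_prod_type]
  simp [eq3, Fintype.sum_prod_type, Equiv.coe_fn_mk]
  rfl

lemma vec3_0 {n : ℕ} (a b c : Fin n) : ![a, b, c] 0 = a := by simp
lemma vec3_1 {n : ℕ} (a b c : Fin n) : ![a, b, c] 1 = b := by simp
lemma vec3_2 {n : ℕ} (a b c : Fin n) : ![a, b, c] 2 = c := by simp

section core
variable {n : ℕ} (G : Matrix (Fin n) (Fin n) ℂ)

lemma h1fact : lift2 (1 : Fin 3) 2 (flipP n) * lift2 (0 : Fin 3) 1 (PtilM n G)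
    = lift2 (0 : Fin 3) 2 (PtilM n G) * lift2 (1 : Fin 3) 2 (flipP n) := by
  ext f g
  rw [Matrix.mul_apply, Matrix.mul_apply, sum_fn3, sum_fn3]
  simp only [lift2_01_apply, lift2_02_apply, lift2_12_apply, PtilM_apply, flipP_apply,
    vec3_0, vec3_1, vec3_2]
  simp [ite_and, Finset.sum_ite_eq, Finset.sum_ite_eq', mul_ite, ite_mul, mul_zero, zero_mul,
    Finset.mul_sum, Finset.sum_mul]

lemma h2fact : lift2 (1 : Fin 3) 2 (flipP n) * lift2 (0 : Fin 3) 2 (PtilM n G)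
    = lift2 (0 : Fin 3) 1 (PtilM n G) * lift2 (1 : Fin 3) 2 (flipP n) := by
  ext f g
  rw [Matrix.mul_apply, Matrix.mul_apply, sum_fn3, sum_fn3]
  simp only [lift2_01_apply, lift2_02_apply, lift2_12_apply, PtilM_apply, flipP_apply,
    vec3_0, vec3_1, vec3_2]
  simp [ite_and, Finset.sum_ite_eq, Finset.sum_ite_eq', mul_ite, ite_mul, mul_zero, zero_mul,
    Finset.mul_sum, Finset.sum_mul]

variable (hG : IsUnit G.det)
include hG

lemma h3fact : lift2 (0 : Fin 3) 1 (PtilM n G) * lift2 (0 : Fin 3) 2 (PtilM n G)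
    = lift2 (0 : Fin 3) 1 (PtilM n G) * lift2 (1 : Fin 3) 2 (flipP n) := by
  have hGG : ∀ a b : Fin n, (∑ c : Fin n, G a c * G⁻¹ c b) = if a = b then 1 else 0 := by
    intro a b
    rw [← Matrix.mul_apply, Matrix.mul_nonsing_inv _ hG, Matrix.one_apply]
  ext f g
  rw [Matrix.mul_apply, Matrix.mul_apply, sum_fn3, sum_fn3]
  simp only [lift2_01_apply, lift2_02_apply, lift2_12_apply, PtilM_apply, flipP_apply,
    vec3_0, vec3_1, vec3_2]
  simp [ite_and, Finset.sum_ite_eq, Finset.sum_ite_eq', mul_ite, ite_mul, mul_zero, zero_mul,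
    Finset.mul_sum, Finset.sum_mul, mul_comm, mul_left_comm, hGG]
  have key : ∀ x : Fin n, G (g 1) x * G⁻¹ (f 0) (f 1) * G (g 2) (g 0) * G⁻¹ x (f 2)
      = (G (g 1) x * G⁻¹ x (f 2)) * (G⁻¹ (f 0) (f 1) * G (g 2) (g 0)) := fun x => by ring
  rw [Finset.sum_congr rfl fun x _ => key x, ← Finset.sum_mul, hGG]
  by_cases h : g 1 = f 2 <;> simp [h, eq_comm, mul_comm]

lemma h4fact : lift2 (0 : Fin 3) 2 (PtilM n G) * lift2 (0 : Fin 3) 1 (PtilM n G)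
    = lift2 (1 : Fin 3) 2 (flipP n) * lift2 (0 : Fin 3) 1 (PtilM n G) := by
  have hGG : ∀ a b : Fin n, (∑ c : Fin n, G a c * G⁻¹ c b) = if a = b then 1 else 0 := by
    intro a b
    rw [← Matrix.mul_apply, Matrix.mul_nonsing_inv _ hG, Matrix.one_apply]
  ext f g
  rw [Matrix.mul_apply, Matrix.mul_apply, sum_fn3, sum_fn3]
  simp only [lift2_01_apply, lift2_02_apply, lift2_12_apply, PtilM_apply, flipP_apply,
    vec3_0, vec3_1, vec3_2]
  simp [ite_and, Finset.sum_ite_eq, Finset.sum_ite_eq', mul_ite, ite_mul, mul_zero, zero_mul,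
    Finset.mul_sum, Finset.sum_mul, mul_comm, mul_left_comm, hGG]
  have key : ∀ x : Fin n, G (g 1) (g 0) * G⁻¹ x (f 1) * (G (g 2) x * G⁻¹ (f 0) (f 2))
      = (G (g 2) x * G⁻¹ x (f 1)) * (G (g 1) (g 0) * G⁻¹ (f 0) (f 2)) := fun x => by ring
  rw [Finset.sum_congr rfl fun x _ => key x, ← Finset.sum_mul, hGG]
  rcases eq_or_ne (g 2) (f 1) with h | h
  · simp [h, eq_comm, mul_comm, mul_left_comm]
  · simp [h, Ne.symm h]

end core

lemma lift2_sub {n : ℕ} {ι : Type} [Fintype ι] [DecidableEq ι] (i j : ι)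
    (Z W : Matrix (Fin n × Fin n) (Fin n × Fin n) ℂ) :
    lift2 i j (Z - W) = lift2 i j Z - lift2 i j W := by
  ext f g; simp [lift2, sub_mul]

lemma lift2_smul {n : ℕ} {ι : Type} [Fintype ι] [DecidableEq ι] (i j : ι) (c : ℂ)
    (Z : Matrix (Fin n × Fin n) (Fin n × Fin n) ℂ) :
    lift2 i j (c • Z) = c • lift2 i j Z := by
  ext f g; simp [lift2, smul_mul_assoc, mul_assoc]

lemma funext3 {n : ℕ} (f g : Fin 3 → Fin n) :
    f = g ↔ f 0 = g 0 ∧ f 1 = g 1 ∧ f 2 = g 2 := by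
  constructor
  · rintro rfl; exact ⟨rfl, rfl, rfl⟩
  · rintro ⟨h0, h1, h2⟩; funext p; fin_cases p <;> assumption

lemma lift2_one_01 {n : ℕ} : lift2 (0 : Fin 3) 1 (1 : Matrix (Fin n × Fin n) (Fin n × Fin n) ℂ) = 1 := by
  ext f g
  rw [lift2_01_apply, Matrix.one_apply, Matrix.one_apply]
  by_cases h0 : f 0 = g 0 <;> by_cases h1 : f 1 = g 1 <;> by_cases h2 : f 2 = g 2 <;>
    simp [funext3, Prod.ext_iff, *]

lemma lift2_one_02 {n : ℕ} : lift2 (0 : Fin 3) 2 (1 : Matrix (Fin n × Fin n) (Fin n × Fin n) ℂ) = 1 := by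
  ext f g
  rw [lift2_02_apply, Matrix.one_apply, Matrix.one_apply]
  by_cases h0 : f 0 = g 0 <;> by_cases h1 : f 1 = g 1 <;> by_cases h2 : f 2 = g 2 <;>
    simp [funext3, Prod.ext_iff, *]

lemma lift2_one_12 {n : ℕ} : lift2 (1 : Fin 3) 2 (1 : Matrix (Fin n × Fin n) (Fin n × Fin n) ℂ) = 1 := by
  ext f g
  rw [lift2_12_apply, Matrix.one_apply, Matrix.one_apply]
  by_cases h0 : f 0 = g 0 <;> by_cases h1 : f 1 = g 1 <;> by_cases h2 : f 2 = g 2 <;>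
    simp [funext3, Prod.ext_iff, *]

lemma ring_key {R : Type*} [Ring R] [Algebra ℂ R] (A B C : R)
    (h1 : C*A = B*C) (h2 : C*B = A*C) (h3 : A*B = A*C) (h4 : B*A = C*A)
    (x y : ℂ) (hx : x ≠ 0) (hy : y ≠ 0) (hxy : x + y ≠ 0) :
    (1 - (x+y)⁻¹ • A) * (1 - x⁻¹ • B) * (1 - y⁻¹ • C)
      = (1 - y⁻¹ • C) * (1 - x⁻¹ • B) * (1 - (x+y)⁻¹ • A) := by
  have eL : A*(B*C) = C*(C*A) := by
    rw [← h1, ← mul_assoc, ← h2, mul_assoc, h4]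
  have eR : C*(B*A) = C*(C*A) := by rw [h4]
  simp only [mul_sub, sub_mul, smul_mul_assoc, mul_smul_comm, smul_smul, one_mul, mul_one,
    mul_assoc]
  rw [h3, h2, eL, eR, h4, h1]
  match_scalars <;> field_simp <;> ring

/-- `R̃₁₂(x+y) R̃₁₃(x) R₂₃(y) = R₂₃(y) R̃₁₃(x) R̃₁₂(x+y)` on `(ℂⁿ)^{⊗3}`,
for the conjugation relative to any non-degenerate symmetric or alternating
bilinear form on `ℂⁿ` (with Gram matrix `G`). -/
theorem stmt2 (n : ℕ) (hn : 1 ≤ n) (G : Matrix (Fin n) (Fin n) ℂ)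
    (hG : IsUnit G.det) (hform : Gᵀ = G ∨ Gᵀ = -G)
    (x y : ℂ) (hx : x ≠ 0) (hy : y ≠ 0) (hxy : x + y ≠ 0) :
    lift2 (0 : Fin 3) 1 (RtilM n G (x + y)) * lift2 (0 : Fin 3) 2 (RtilM n G x) *
      lift2 (1 : Fin 3) 2 (Rm n y)
  = lift2 (1 : Fin 3) 2 (Rm n y) * lift2 (0 : Fin 3) 2 (RtilM n G x) *
      lift2 (0 : Fin 3) 1 (RtilM n G (x + y)) := by
  have e01 : lift2 (0 : Fin 3) 1 (RtilM n G (x + y))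
      = 1 - (x + y)⁻¹ • lift2 (0 : Fin 3) 1 (PtilM n G) := by
    rw [RtilM, lift2_sub, lift2_smul, lift2_one_01]
  have e02 : lift2 (0 : Fin 3) 2 (RtilM n G x)
      = 1 - x⁻¹ • lift2 (0 : Fin 3) 2 (PtilM n G) := by
    rw [RtilM, lift2_sub, lift2_smul, lift2_one_02]
  have e12 : lift2 (1 : Fin 3) 2 (Rm n y)
      = 1 - y⁻¹ • lift2 (1 : Fin 3) 2 (flipP n) := by
    rw [Rm, lift2_sub, lift2_smul, lift2_one_12]
  rw [e01, e02, e12]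
  exact ring_key _ _ _ (h1fact G) (h2fact G) (h3fact G hG) (h4fact G hG) x y hx hy hxy
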